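/- Let F be a graph with vertex set {1, …, m}, let G be a graph, let γ > 0 satisfy γ < 1/m², and let V₁, …, V_m be pairwise disjoint nonempty subsets of V(G) such that for every edge {j, ℓ} of F one has d(V_j, V_ℓ) ≥ 1−γ, and for every non-edge {j, ℓ} of F (j ≠ ℓ) one has d(V_j, V_ℓ) ≤ γ. Then the number of tuples (v₁, …, v_m) with v_j ∈ V_j for each j such that {v₁, …, v_m} spans an induced copy of F in G (with v_j playing the role of vertex j of F) is at least (1/2)·|V₁|·|V₂|·⋯·|V_m|. -/

import Mathlib

open Finset

/-- The number of edges of `G` with both endpoints in `X`. -/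
def edgesIn {V : Type} [Fintype V] [DecidableEq V] (G : SimpleGraph V) [DecidableRel G.Adj]
    (X : Finset V) : ℕ :=
  (G.edgeFinset.filter fun e => ∀ v ∈ e, v ∈ X).card

/-- The edge density of a vertex set `X`: `e(X) / (|X| choose 2)`. -/
noncomputable def edgeDensityIn {V : Type} [Fintype V] [DecidableEq V] (G : SimpleGraph V)
    [DecidableRel G.Adj] (X : Finset V) : ℝ :=
  (edgesIn G X : ℝ) / (X.card.choose 2 : ℝ)

/-- `X` is `ε`-homogeneous if its edge density is at most `ε` or at least `1 - ε`. -/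
def EpsHomogeneous {V : Type} [Fintype V] [DecidableEq V] (G : SimpleGraph V)
    [DecidableRel G.Adj] (X : Finset V) (ε : ℝ) : Prop :=
  edgeDensityIn G X ≤ ε ∨ 1 - ε ≤ edgeDensityIn G X

/-- The bipartite edge density `d(A,B) = e(A,B)/(|A||B|)` between (disjoint) sets `A`, `B`. -/
noncomputable def pairDensity {V : Type} [Fintype V] [DecidableEq V] (G : SimpleGraph V)
    [DecidableRel G.Adj] (A B : Finset V) : ℝ :=
  (((A ×ˢ B).filter fun p => G.Adj p.1 p.2).card : ℝ) / ((A.card : ℝ) * (B.card : ℝ))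

/-- The number of induced copies of `F` in `G`, i.e. the number of vertex subsets `S`
whose induced subgraph is isomorphic to `F`. -/
noncomputable def inducedCopyCount {V : Type} [Fintype V] [DecidableEq V] (G : SimpleGraph V)
    {m : ℕ} (F : SimpleGraph (Fin m)) : ℕ :=
  Set.ncard {S : Finset V | Nonempty ((G.induce (S : Set V)) ≃g F)}

/-- A graph is bipartite: its vertex set splits into two independent sets. -/
def IsBipartiteGraph {m : ℕ} (F : SimpleGraph (Fin m)) : Prop :=
  ∃ A : Set (Fin m), (∀ u ∈ A, ∀ v ∈ A, ¬ F.Adj u v) ∧ (∀ u ∉ A, ∀ v ∉ A, ¬ F.Adj u v)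

/-- A split graph: its vertex set splits into a clique and an independent set. -/
def IsSplitGraph {m : ℕ} (F : SimpleGraph (Fin m)) : Prop :=
  ∃ A : Set (Fin m), F.IsClique A ∧ (∀ u ∉ A, ∀ v ∉ A, ¬ F.Adj u v)

/-- A family of graphs `(Fg i)` has the Erdős–Hajnal property: there is `c > 0` such that every
graph with no induced copy of any member has a clique or independent set of size `≥ c * n ^ c`. -/
def EHFamily {ι : Type} (Fm : ι → ℕ) (Fg : ∀ i, SimpleGraph (Fin (Fm i))) : Prop :=
  ∃ c : ℝ, 0 < c ∧ ∀ (n : ℕ) (G : SimpleGraph (Fin n)),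
    (∀ i, inducedCopyCount G (Fg i) = 0) →
    ∃ S : Finset (Fin n), (G.IsClique (S : Set (Fin n)) ∨ Gᶜ.IsClique (S : Set (Fin n))) ∧
      c * (n : ℝ) ^ c ≤ (S.card : ℝ)

open scoped Classical

private lemma bad_pairs_card {V : Type} [Fintype V] [DecidableEq V] (G : SimpleGraph V)
    [DecidableRel G.Adj] {m : ℕ} (F : SimpleGraph (Fin m)) {γ : ℝ}
    (W : Fin m → Finset V) (hne : ∀ j, (W j).Nonempty)
    (hedge : ∀ j ℓ, F.Adj j ℓ → 1 - γ ≤ pairDensity G (W j) (W ℓ))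
    (hnonedge : ∀ j ℓ, j ≠ ℓ → ¬ F.Adj j ℓ → pairDensity G (W j) (W ℓ) ≤ γ)
    {j ℓ : Fin m} (hjl : j ≠ ℓ) :
    (((((W j) ×ˢ (W ℓ)).filter fun q : V × V => ¬ (G.Adj q.1 q.2 ↔ F.Adj j ℓ)).card : ℝ))
      ≤ γ * ((W j).card * (W ℓ).card) := by
  classical
  have ha : (0:ℝ) < (W j).card := by exact_mod_cast (hne j).card_pos
  have hb : (0:ℝ) < (W ℓ).card := by exact_mod_cast (hne ℓ).card_pos
  have hsum : (((W j ×ˢ W ℓ).filter fun q => G.Adj q.1 q.2).card : ℝ)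
      + (((W j ×ˢ W ℓ).filter fun q => ¬ G.Adj q.1 q.2).card : ℝ)
      = ((W j).card : ℝ) * ((W ℓ).card : ℝ) := by
    have := Finset.card_filter_add_card_filter_not
      (s := (W j) ×ˢ (W ℓ)) (p := fun q => G.Adj q.1 q.2)
    rw [Finset.card_product] at this
    exact_mod_cast this
  by_cases hadj : F.Adj j ℓ
  · have h1 := hedge j ℓ hadj
    rw [pairDensity, le_div_iff₀ (by positivity)] at h1
    have h3 : (((W j) ×ˢ (W ℓ)).filter fun q => ¬ (G.Adj q.1 q.2 ↔ F.Adj j ℓ))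
        = (((W j) ×ˢ (W ℓ)).filter fun q => ¬ G.Adj q.1 q.2) := by
      apply Finset.filter_congr; intro q _; simp [hadj]
    rw [h3]
    nlinarith
  · have h1 := hnonedge j ℓ hjl hadj
    rw [pairDensity, div_le_iff₀ (by positivity)] at h1
    have h3 : (((W j) ×ˢ (W ℓ)).filter fun q => ¬ (G.Adj q.1 q.2 ↔ F.Adj j ℓ))
        = (((W j) ×ˢ (W ℓ)).filter fun q => G.Adj q.1 q.2) := by
      apply Finset.filter_congr; intro q _; simp [hadj]
    rw [h3]
    nlinarith

private lemma bad_tuples_card {V : Type} [Fintype V] [DecidableEq V] (G : SimpleGraph V)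
    [DecidableRel G.Adj] {m : ℕ} (F : SimpleGraph (Fin m)) {γ : ℝ} (hγ0 : 0 < γ)
    (W : Fin m → Finset V) (hne : ∀ j, (W j).Nonempty)
    (hedge : ∀ j ℓ, F.Adj j ℓ → 1 - γ ≤ pairDensity G (W j) (W ℓ))
    (hnonedge : ∀ j ℓ, j ≠ ℓ → ¬ F.Adj j ℓ → pairDensity G (W j) (W ℓ) ≤ γ)
    {j ℓ : Fin m} (hjl : j ≠ ℓ) :
    ((((Fintype.piFinset W).filter fun v : Fin m → V => ¬ (G.Adj (v j) (v ℓ) ↔ F.Adj j ℓ)).card : ℝ))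
      ≤ γ * ∏ k, ((W k).card : ℝ) := by
  classical
  set E := (((W j) ×ˢ (W ℓ)).filter fun q => ¬ (G.Adj q.1 q.2 ↔ F.Adj j ℓ)) with hE
  set R := ((Finset.univ : Finset (Fin m)) \ {j}) \ {ℓ} with hR
  have hcard : ((Fintype.piFinset W).filter fun v => ¬ (G.Adj (v j) (v ℓ) ↔ F.Adj j ℓ)).card
      ≤ (E ×ˢ (R.pi fun k => W k)).card := by
    apply Finset.card_le_card_of_injOn (fun v => ((v j, v ℓ), fun k _ => v k))
    · intro v hv
      simp only [Finset.mem_coe, Finset.mem_filter, Fintype.mem_piFinset] at hv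
      simp only [Finset.mem_coe, Finset.mem_product, hE, Finset.mem_filter, Finset.mem_pi]
      exact ⟨⟨⟨hv.1 j, hv.1 ℓ⟩, hv.2⟩, fun k _ => hv.1 k⟩
    · intro v _ v' _ h
      simp only [Prod.mk.injEq] at h
      obtain ⟨⟨h1, h2⟩, h3⟩ := h
      funext k
      by_cases hkj : k = j
      · subst hkj; exact h1
      by_cases hkl : k = ℓ
      · subst hkl; exact h2
      have hk : k ∈ R := by simp [hR, hkj, hkl]
      exact congrFun (congrFun h3 k) hk
  have hcard2 : ((E ×ˢ (R.pi fun k => W k)).card : ℝ) = (E.card : ℝ) * ∏ k ∈ R, ((W k).card : ℝ) := by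
    rw [Finset.card_product, Finset.card_pi]
    push_cast; ring
  have hprod : ∏ k, ((W k).card : ℝ)
      = ((W j).card : ℝ) * (((W ℓ).card : ℝ) * ∏ k ∈ R, ((W k).card : ℝ)) := by
    rw [Finset.prod_eq_mul_prod_sdiff_singleton_of_mem (Finset.mem_univ j)]
    congr 1
    exact Finset.prod_eq_mul_prod_sdiff_singleton_of_mem
      (by simp [Finset.mem_sdiff, hjl.symm]) _
  have hEb := bad_pairs_card G F W hne hedge hnonedge hjl
  have hRpos : (0:ℝ) ≤ ∏ k ∈ R, ((W k).card : ℝ) :=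
    Finset.prod_nonneg fun k _ => Nat.cast_nonneg _
  calc ((((Fintype.piFinset W).filter fun v : Fin m → V => ¬ (G.Adj (v j) (v ℓ) ↔ F.Adj j ℓ)).card : ℝ))
      ≤ ((E ×ˢ (R.pi fun k => W k)).card : ℝ) := by exact_mod_cast hcard
    _ = (E.card : ℝ) * ∏ k ∈ R, ((W k).card : ℝ) := hcard2
    _ ≤ (γ * ((W j).card * (W ℓ).card)) * ∏ k ∈ R, ((W k).card : ℝ) := by
        apply mul_le_mul_of_nonneg_right hEb hRpos
    _ = γ * ∏ k, ((W k).card : ℝ) := by rw [hprod]; ring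

/-- **Counting lemma.** Let `F` be a graph on `{1, …, m}`, let `0 < γ < 1/m²`, and let
`W 1, …, W m` be pairwise disjoint nonempty vertex sets of `G` such that pairs corresponding
to edges of `F` have density `≥ 1 - γ` and pairs corresponding to non-edges have density
`≤ γ`. Then at least half of the tuples `(v₁, …, v_m) ∈ W 1 × ⋯ × W m` span an induced copy
of `F`, with `v j` playing the role of vertex `j`. -/
theorem counting_lemma {m : ℕ} (F : SimpleGraph (Fin m))
    {V : Type} [Fintype V] [DecidableEq V] (G : SimpleGraph V) [DecidableRel G.Adj]
    (γ : ℝ) (hγ0 : 0 < γ) (hγ : γ < 1 / (m : ℝ) ^ 2)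
    (W : Fin m → Finset V)
    (hne : ∀ j, (W j).Nonempty)
    (hdisj : ∀ j ℓ, j ≠ ℓ → Disjoint (W j) (W ℓ))
    (hedge : ∀ j ℓ, F.Adj j ℓ → 1 - γ ≤ pairDensity G (W j) (W ℓ))
    (hnonedge : ∀ j ℓ, j ≠ ℓ → ¬ F.Adj j ℓ → pairDensity G (W j) (W ℓ) ≤ γ) :
    (1 / 2 : ℝ) * ∏ j, ((W j).card : ℝ) ≤
      (Set.ncard {v : Fin m → V | (∀ j, v j ∈ W j) ∧ Function.Injective v ∧
        ∀ j ℓ, j ≠ ℓ → (G.Adj (v j) (v ℓ) ↔ F.Adj j ℓ)} : ℝ) := by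
  classical
  set T := ((Fintype.piFinset W).filter fun v =>
    ∀ j ℓ, j ≠ ℓ → (G.Adj (v j) (v ℓ) ↔ F.Adj j ℓ)) with hT
  have hset : {v : Fin m → V | (∀ j, v j ∈ W j) ∧ Function.Injective v ∧
      ∀ j ℓ, j ≠ ℓ → (G.Adj (v j) (v ℓ) ↔ F.Adj j ℓ)} = (↑T : Set (Fin m → V)) := by
    ext v
    simp only [Set.mem_setOf_eq, hT, Finset.coe_filter, Fintype.mem_piFinset, Set.mem_setOf_eq]
    constructor
    · rintro ⟨h1, _, h3⟩; exact ⟨h1, h3⟩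
    · rintro ⟨h1, h3⟩
      refine ⟨h1, ?_, h3⟩
      intro a b hab
      by_contra hne'
      exact Finset.disjoint_left.mp (hdisj a b hne') (h1 a) (hab ▸ h1 b)
  rw [hset, Set.ncard_coe_finset]
  -- Bad set
  set B := ((Fintype.piFinset W).filter fun v =>
    ¬ ∀ j ℓ, j ≠ ℓ → (G.Adj (v j) (v ℓ) ↔ F.Adj j ℓ)) with hB
  have hTB : T.card + B.card = ∏ j, (W j).card := by
    rw [hT, hB, Finset.card_filter_add_card_filter_not, Fintype.card_piFinset]
  set pairs := ((Finset.univ : Finset (Fin m × Fin m)).filter fun p => p.1 < p.2) with hpairs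
  have hBsub : B ⊆ pairs.biUnion fun p =>
      (Fintype.piFinset W).filter fun v => ¬ (G.Adj (v p.1) (v p.2) ↔ F.Adj p.1 p.2) := by
    intro v hv
    simp only [hB, Finset.mem_filter] at hv
    obtain ⟨hv1, hv2⟩ := hv
    simp only [not_forall] at hv2
    obtain ⟨j, ℓ, hjl, hbad⟩ := hv2
    rcases lt_or_gt_of_ne hjl with h | h
    · exact Finset.mem_biUnion.mpr ⟨(j, ℓ), by simp [hpairs, h],
        Finset.mem_filter.mpr ⟨hv1, hbad⟩⟩
    · refine Finset.mem_biUnion.mpr ⟨(ℓ, j), by simp [hpairs, h], Finset.mem_filter.mpr ⟨hv1, ?_⟩⟩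
      intro hc
      exact hbad ((G.adj_comm _ _).trans (hc.trans (F.adj_comm _ _)))
  have hBcard : (B.card : ℝ) ≤ (pairs.card : ℝ) * (γ * ∏ k, ((W k).card : ℝ)) := by
    calc (B.card : ℝ) ≤ ((pairs.biUnion fun p =>
        (Fintype.piFinset W).filter fun v => ¬ (G.Adj (v p.1) (v p.2) ↔ F.Adj p.1 p.2)).card : ℝ) := by
          exact_mod_cast Finset.card_le_card hBsub
      _ ≤ ∑ p ∈ pairs, (((Fintype.piFinset W).filter fun v =>
            ¬ (G.Adj (v p.1) (v p.2) ↔ F.Adj p.1 p.2)).card : ℝ) := by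
          exact_mod_cast Finset.card_biUnion_le
      _ ≤ ∑ _p ∈ pairs, γ * ∏ k, ((W k).card : ℝ) := by
          apply Finset.sum_le_sum
          intro p hp
          have hlt : p.1 < p.2 := (Finset.mem_filter.mp hp).2
          exact bad_tuples_card G F hγ0 W hne hedge hnonedge hlt.ne
      _ = (pairs.card : ℝ) * (γ * ∏ k, ((W k).card : ℝ)) := by
          rw [Finset.sum_const, nsmul_eq_mul]
  -- pairs.card bound : 2 * pairs.card ≤ m * m
  have hpc : 2 * pairs.card ≤ m * m := by
    set pairs' := ((Finset.univ : Finset (Fin m × Fin m)).filter fun p => p.2 < p.1) with hpairs'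
    have hcardeq : pairs.card = pairs'.card := by
      apply Finset.card_bij (fun p _ => p.swap)
      · intro p hp; simp only [hpairs', Finset.mem_filter, Finset.mem_univ, true_and, Prod.snd_swap,
          Prod.fst_swap]
        exact (Finset.mem_filter.mp hp).2
      · intro p _ q _ h; exact Prod.swap_injective h
      · intro p hp
        exact ⟨p.swap, Finset.mem_filter.mpr ⟨Finset.mem_univ _, (Finset.mem_filter.mp hp).2⟩,
          (Prod.swap_swap p).symm⟩
    have hdj : Disjoint pairs pairs' := by
      rw [Finset.disjoint_left]
      intro p hp hp'
      exact absurd ((Finset.mem_filter.mp hp).2) (not_lt_of_gt (Finset.mem_filter.mp hp').2)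
    have hun : (pairs ∪ pairs').card ≤ Fintype.card (Fin m × Fin m) :=
      Finset.card_le_card (Finset.subset_univ _) |>.trans_eq (Finset.card_univ)
    rw [Finset.card_union_of_disjoint hdj, ← hcardeq] at hun
    simpa [Fintype.card_prod, two_mul] using hun
  -- finish
  have hm2 : γ * ((m : ℝ) * m) < 1 := by
    have hm0 : m ≠ 0 := by
      rintro rfl
      norm_num at hγ
      linarith
    have hmR : (0:ℝ) < (m:ℝ) := by exact_mod_cast Nat.pos_of_ne_zero hm0
    have hmpos : (0:ℝ) < (m:ℝ)^2 := by positivity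
    have := (lt_div_iff₀ hmpos).mp hγ
    nlinarith [sq_nonneg ((m:ℝ))]
  have hNpos : (0:ℝ) ≤ ∏ k, ((W k).card : ℝ) := by positivity
  have hPB : (B.card : ℝ) ≤ (1/2 : ℝ) * ∏ k, ((W k).card : ℝ) := by
    have h1 : (pairs.card : ℝ) * γ ≤ ((m:ℝ) * m / 2) * γ := by
      apply mul_le_mul_of_nonneg_right _ hγ0.le
      have : (2 * pairs.card : ℝ) ≤ (m:ℝ) * m := by exact_mod_cast hpc
      linarith
    have h2 : ((m:ℝ) * m / 2) * γ ≤ 1/2 := by nlinarith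
    calc (B.card : ℝ) ≤ (pairs.card : ℝ) * (γ * ∏ k, ((W k).card : ℝ)) := hBcard
      _ = ((pairs.card : ℝ) * γ) * ∏ k, ((W k).card : ℝ) := by ring
      _ ≤ (1/2 : ℝ) * ∏ k, ((W k).card : ℝ) := by
          apply mul_le_mul_of_nonneg_right _ hNpos
          exact le_trans h1 h2
  have hTBR : (T.card : ℝ) + (B.card : ℝ) = ∏ k, ((W k).card : ℝ) := by
    rw [← Nat.cast_prod, ← hTB]
    push_cast
    ring
  linarith
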